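/- Let N be a positive integer and let q, c ∈ ℂ with 0 < |q| < 1, |cq| < 1 and c ≠ 1. Then ∑_{n=1}^∞ c^{n−1} · [ (q^n;q)_N − 1 ] = ∑_{n=1}^{N} [N n]_q · (−1)^n q^{n(n+1)/2} / (1 − cq^n) = (1/(1−c)) · ( (q;q)_N/(cq;q)_N − 1 ). -/

import Mathlib

/-- Finite q-Pochhammer symbol `(x;q)_n = ∏_{k=0}^{n-1} (1 - x q^k)`. -/
noncomputable def qPoch (x q : ℂ) (n : ℕ) : ℂ := ∏ k ∈ Finset.range n, (1 - x * q ^ k)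

/-- Infinite q-Pochhammer symbol `(x;q)_∞ = ∏_{k=0}^{∞} (1 - x q^k)`. -/
noncomputable def qPochInf (x q : ℂ) : ℂ := ∏' k : ℕ, (1 - x * q ^ k)

/-- Gaussian binomial coefficient `[n k]_q`, equal to `0` for `k > n`. -/
noncomputable def gbinom (q : ℂ) (n k : ℕ) : ℂ :=
  if k ≤ n then qPoch q q n / (qPoch q q k * qPoch q q (n - k)) else 0

lemma qPoch_zero (x q : ℂ) : qPoch x q 0 = 1 := Finset.prod_range_zero _
lemma qPoch_succ (x q : ℂ) (n : ℕ) : qPoch x q (n+1) = qPoch x q n * (1 - x * q ^ n) :=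
  Finset.prod_range_succ _ _
lemma qPoch_succ' (x q : ℂ) (n : ℕ) : qPoch x q (n+1) = qPoch (x*q) q n * (1 - x) := by
  rw [qPoch, Finset.prod_range_succ']
  simp only [pow_zero, mul_one, qPoch]
  congr 1
  exact Finset.prod_congr rfl fun k _ => by ring_nf

lemma tri1 (i : ℕ) : (i+1)*i/2 = i*(i-1)/2 + i := by
  cases i with
  | zero => simp
  | succ j =>
    obtain ⟨r, hr⟩ := Nat.even_mul_succ_self j
    have h1 : (j+1+1)*(j+1) = (r+r) + 2*(j+1) := by rw [← hr]; ring
    have h2 : (j+1)*(j+1-1) = r + r := by simp; rw [← hr]; ring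
    omega

section
variable {q : ℂ} (hq1 : ‖q‖ < 1)
include hq1
lemma one_sub_q_pow_ne (k : ℕ) (hk : 1 ≤ k) : (1:ℂ) - q ^ k ≠ 0 := by
  intro h
  have habs : ‖q ^ k‖ < 1 := by
    rw [norm_pow]; exact pow_lt_one₀ (norm_nonneg q) hq1 (by omega)
  rw [sub_eq_zero] at h
  rw [← h] at habs; simp at habs
lemma qq_ne (n : ℕ) : qPoch q q n ≠ 0 := by
  rw [qPoch]
  apply Finset.prod_ne_zero_iff.mpr
  intro k _
  have := one_sub_q_pow_ne hq1 (k+1) (by omega)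
  simpa [pow_succ, mul_comm] using this
lemma gbinom_zero (n : ℕ) : gbinom q n 0 = 1 := by
  simp [gbinom, qPoch_zero, div_self (qq_ne hq1 n)]
lemma gbinom_self (n : ℕ) : gbinom q n n = 1 := by
  simp [gbinom, qPoch_zero, div_self (qq_ne hq1 n)]
omit hq1 in
lemma gbinom_gt {n k : ℕ} (h : n < k) : gbinom q n k = 0 := by
  simp [gbinom, Nat.not_le.mpr h]
lemma gbinom_pascal (N m : ℕ) (hm : m ≤ N) :
    gbinom q (N+1) (m+1) = gbinom q N (m+1) + q^(N-m) * gbinom q N m := by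
  rcases eq_or_lt_of_le hm with rfl | hlt
  · rw [gbinom_self hq1, gbinom_gt (by omega), Nat.sub_self, pow_zero, gbinom_self hq1]
    ring
  · obtain ⟨d, rfl⟩ : ∃ d, N = m + d + 1 := ⟨N - m - 1, by omega⟩
    have e1 : m + d + 1 + 1 - (m + 1) = d + 1 := by omega
    have e2 : m + d + 1 - (m + 1) = d := by omega
    have e3 : m + d + 1 - m = d + 1 := by omega
    rw [gbinom, gbinom, gbinom, if_pos (by omega), if_pos (by omega), if_pos (by omega),
      e1, e2, e3]
    have h1 : qPoch q q (m + d + 1 + 1) = qPoch q q (m + d + 1) * (1 - q * q ^ (m+d+1)) :=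
      qPoch_succ q q (m+d+1)
    have h2 : qPoch q q (m + 1) = qPoch q q m * (1 - q * q ^ m) := qPoch_succ q q m
    have h3 : qPoch q q (d + 1) = qPoch q q d * (1 - q * q ^ d) := qPoch_succ q q d
    rw [h1, h2, h3]
    have nm := qq_ne hq1 m
    have nd := qq_ne hq1 d
    have nmd := qq_ne hq1 (m+d+1)
    have n1 : (1:ℂ) - q * q ^ m ≠ 0 := by
      have := one_sub_q_pow_ne hq1 (m+1) (by omega); rwa [pow_succ, mul_comm (q^m) q] at this
    have n2 : (1:ℂ) - q * q ^ d ≠ 0 := by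
      have := one_sub_q_pow_ne hq1 (d+1) (by omega); rwa [pow_succ, mul_comm (q^d) q] at this
    field_simp
    ring

lemma qbinom_thm (N : ℕ) (x : ℂ) :
    qPoch x q N = ∑ n ∈ Finset.range (N+1), gbinom q N n * (-1:ℂ)^n * q^(n*(n-1)/2) * x^n := by
  induction N with
  | zero => simp [qPoch_zero, gbinom_zero hq1]
  | succ N IH =>
    have hg1 : gbinom q N (N+1) * (-1:ℂ)^(N+1) * q^((N+1)*(N+1-1)/2) * x^(N+1) = 0 := by
      rw [gbinom_gt (by omega)]; ring
    calc qPoch x q (N+1)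
        = (∑ n ∈ Finset.range (N+1), gbinom q N n * (-1:ℂ)^n * q^(n*(n-1)/2) * x^n)
            * (1 - x * q ^ N) := by rw [qPoch_succ, IH]
      _ = ∑ n ∈ Finset.range (N+2), gbinom q (N+1) n * (-1:ℂ)^n * q^(n*(n-1)/2) * x^n := by
          rw [Finset.sum_range_succ' (fun n => gbinom q (N+1) n * (-1:ℂ)^n * q^(n*(n-1)/2) * x^n) (N+1)]
          have hterm : ∀ i ∈ Finset.range (N+1),
              gbinom q (N+1) (i+1) * (-1:ℂ)^(i+1) * q^((i+1)*(i+1-1)/2) * x^(i+1)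
              = gbinom q N (i+1) * (-1:ℂ)^(i+1) * q^((i+1)*(i+1-1)/2) * x^(i+1)
                + (-(x * q^N)) * (gbinom q N i * (-1:ℂ)^i * q^(i*(i-1)/2) * x^i) := by
            intro i hi
            have hiN : i ≤ N := by simpa using Nat.lt_succ_iff.mp (Finset.mem_range.mp hi)
            rw [gbinom_pascal hq1 N i hiN]
            simp only [Nat.add_sub_cancel]
            have hpow : q^(N-i) * q^((i+1)*i/2) = q^N * q^(i*(i-1)/2) := by
              rw [← pow_add, ← pow_add]
              congr 1
              have := tri1 i
              omega
            linear_combination ((-1:ℂ)^(i+1) * gbinom q N i * x^(i+1)) * hpow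
          rw [Finset.sum_congr rfl hterm, Finset.sum_add_distrib]
          have hshift := Finset.sum_range_succ' (fun n => gbinom q N n * (-1:ℂ)^n * q^(n*(n-1)/2) * x^n) (N+1)
          have hlast := Finset.sum_range_succ (fun n => gbinom q N n * (-1:ℂ)^n * q^(n*(n-1)/2) * x^n) (N+1)
          rw [hg1, add_zero] at hlast
          have h0 : gbinom q (N+1) 0 * (-1:ℂ)^0 * q^(0*(0-1)/2) * x^0 = 1 := by
            simp [gbinom_zero hq1]
          have h0' : gbinom q N 0 * (-1:ℂ)^0 * q^(0*(0-1)/2) * x^0 = 1 := by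
            simp [gbinom_zero hq1]
          rw [h0]
          rw [← Finset.mul_sum]
          have : (∑ i ∈ Finset.range (N+1),
              gbinom q N (i+1) * (-1:ℂ)^(i+1) * q^((i+1)*(i+1-1)/2) * x^(i+1))
              = (∑ n ∈ Finset.range (N+1), gbinom q N n * (-1:ℂ)^n * q^(n*(n-1)/2) * x^n) - 1 := by
            have hA := hshift.symm.trans hlast
            rw [h0'] at hA
            exact eq_sub_iff_add_eq.mpr hA
          rw [this]
          ring

omit hq1 in
lemma tri2 (n : ℕ) : (n+1)*((n+1)+1)/2 = n*(n+1)/2 + (n+1) := by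
  obtain ⟨r, hr⟩ := Nat.even_mul_succ_self n
  have h1 : (n+1)*(n+1+1) = (r+r) + 2*(n+1) := by rw [← hr]; ring
  omega

lemma pf (N : ℕ) : ∀ c : ℂ, (∀ n, n ≤ N → (1:ℂ) - c * q ^ n ≠ 0) →
    ∑ n ∈ Finset.range (N+1), gbinom q N n * (-1:ℂ)^n * q^(n*(n+1)/2) / (1 - c * q ^ n)
      = qPoch q q N / qPoch c q (N+1) := by
  induction N with
  | zero =>
    intro c hc
    simp [gbinom_zero hq1, qPoch_succ, qPoch_zero]
  | succ N IH =>
    intro c hc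
    have hc0 : (1:ℂ) - c ≠ 0 := by simpa using hc 0 (by omega)
    have hcN : (1:ℂ) - c * q^(N+1) ≠ 0 := hc (N+1) le_rfl
    have hP : qPoch (c*q) q N ≠ 0 := by
      rw [qPoch]
      apply Finset.prod_ne_zero_iff.mpr
      intro k hk
      have e : c*q*q^k = c*q^(k+1) := by rw [pow_succ]; ring
      rw [e]
      exact hc (k+1) (by have := Finset.mem_range.mp hk; omega)
    have Scq := IH (c*q) (fun n hn => by
      have e : c*q*q^n = c*q^(n+1) := by rw [pow_succ]; ring
      rw [e]; exact hc (n+1) (by omega))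
    have Sc := IH c (fun n hn => hc n (by omega))
    -- rewrite the RHS pieces
    have r1 : qPoch c q (N+1+1) = qPoch (c*q) q (N+1) * (1-c) := qPoch_succ' c q (N+1)
    have r2 : qPoch (c*q) q (N+1) = qPoch (c*q) q N * (1 - c*q^(N+1)) := by
      rw [qPoch_succ]
      have e : c*q*q^N = c*q^(N+1) := by rw [pow_succ]; ring
      rw [e]
    have r3 : qPoch c q (N+1) = qPoch (c*q) q N * (1-c) := qPoch_succ' c q N
    have r4 : qPoch q q (N+1) = qPoch q q N * (1 - q^(N+1)) := by
      rw [qPoch_succ]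
      have e : q*q^N = q^(N+1) := by rw [pow_succ]; ring
      rw [e]
    rw [r3] at Sc
    rw [r2] at Scq
    -- LHS manipulation
    rw [Finset.sum_range_succ'
      (fun n => gbinom q (N+1) n * (-1:ℂ)^n * q^(n*(n+1)/2) / (1 - c * q ^ n)) (N+1)]
    have hterm : ∀ i ∈ Finset.range (N+1),
        gbinom q (N+1) (i+1) * (-1:ℂ)^(i+1) * q^((i+1)*(i+1+1)/2) / (1 - c * q ^ (i+1))
        = gbinom q N (i+1) * (-1:ℂ)^(i+1) * q^((i+1)*(i+1+1)/2) / (1 - c * q ^ (i+1))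
          + (-(q^(N+1))) * (gbinom q N i * (-1:ℂ)^i * q^(i*(i+1)/2) / (1 - c*q * q ^ i)) := by
      intro i hi
      have hiN : i ≤ N := Nat.lt_succ_iff.mp (Finset.mem_range.mp hi)
      rw [gbinom_pascal hq1 N i hiN]
      have eden : (1:ℂ) - c*q*q^i = 1 - c*q^(i+1) := by rw [pow_succ]; ring_nf
      rw [eden]
      have epow : q^(N-i) * q^((i+1)*(i+1+1)/2) = q^(N+1) * q^(i*(i+1)/2) := by
        rw [← pow_add, ← pow_add]
        congr 1
        have := tri2 i
        omega
      rw [← mul_div_assoc, ← add_div]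
      congr 1
      linear_combination (-(gbinom q N i * (-1:ℂ)^i)) * epow
    rw [Finset.sum_congr rfl hterm, Finset.sum_add_distrib, ← Finset.mul_sum, Scq]
    have hshift := Finset.sum_range_succ'
      (fun n => gbinom q N n * (-1:ℂ)^n * q^(n*(n+1)/2) / (1 - c * q ^ n)) (N+1)
    have hlast := Finset.sum_range_succ
      (fun n => gbinom q N n * (-1:ℂ)^n * q^(n*(n+1)/2) / (1 - c * q ^ n)) (N+1)
    have hgN : gbinom q N (N+1) * (-1:ℂ)^(N+1) * q^((N+1)*(N+1+1)/2) / (1 - c*q^(N+1)) = 0 := by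
      rw [gbinom_gt (by omega)]; ring
    rw [hgN, add_zero] at hlast
    have h0 : gbinom q N 0 * (-1:ℂ)^0 * q^(0*(0+1)/2) / (1 - c*q^0) = 1/(1-c) := by
      simp [gbinom_zero hq1]
    have hA := hshift.symm.trans hlast
    rw [h0] at hA
    have hB : (∑ i ∈ Finset.range (N+1),
        gbinom q N (i+1) * (-1:ℂ)^(i+1) * q^((i+1)*(i+1+1)/2) / (1 - c*q^(i+1)))
        = (∑ n ∈ Finset.range (N+1), gbinom q N n * (-1:ℂ)^n * q^(n*(n+1)/2) / (1 - c * q ^ n))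
          - 1/(1-c) := eq_sub_iff_add_eq.mpr hA
    rw [hB, Sc]
    have key : qPoch q q N / (qPoch (c*q) q N * (1-c))
        - q^(N+1) * (qPoch q q N / (qPoch (c*q) q N * (1 - c*q^(N+1))))
        = qPoch q q (N+1) / qPoch c q (N+1+1) := by
      rw [r1, r2, r4]
      generalize q^(N+1) = e at hcN ⊢
      field_simp
      ring
    have h0' : gbinom q (N+1) 0 * (-1:ℂ)^0 * q^(0*(0+1)/2) / (1 - c*q^0) = 1/(1-c) := by
      simp [gbinom_zero hq1]
    rw [h0']
    linear_combination key

end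

lemma one_sub_ne_of_abs_lt {z : ℂ} (h : ‖z‖ < 1) : (1:ℂ) - z ≠ 0 := by
  intro h0
  rw [sub_eq_zero] at h0
  rw [← h0] at h
  simp at h

theorem stmt1' (N : ℕ) (hN : 1 ≤ N) (q c : ℂ) (hq0 : 0 < ‖q‖)
    (hq1 : ‖q‖ < 1) (hcq : ‖c * q‖ < 1) (hc : c ≠ 1) :
    (∑' n : ℕ, c ^ n * (qPoch (q ^ (n + 1)) q N - 1)
        = ∑ n ∈ Finset.Icc 1 N,
            gbinom q N n * (-1 : ℂ) ^ n * q ^ (n * (n + 1) / 2) / (1 - c * q ^ n))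
    ∧ (∑ n ∈ Finset.Icc 1 N,
            gbinom q N n * (-1 : ℂ) ^ n * q ^ (n * (n + 1) / 2) / (1 - c * q ^ n)
        = 1 / (1 - c) * (qPoch q q N / qPoch (c * q) q N - 1)) := by
  have habs : ∀ k : ℕ, 1 ≤ k → ‖c * q ^ k‖ < 1 := by
    intro k hk
    obtain ⟨j, rfl⟩ : ∃ j, k = j + 1 := ⟨k - 1, by omega⟩
    have e : c * q ^ (j+1) = (c * q) * q ^ j := by rw [pow_succ']; ring
    rw [e, norm_mul]
    calc ‖c*q‖ * ‖q ^ j‖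
        ≤ ‖c*q‖ * 1 := by
          apply mul_le_mul_of_nonneg_left _ (norm_nonneg _)
          rw [norm_pow]
          exact pow_le_one₀ (norm_nonneg _) hq1.le
      _ = ‖c*q‖ := mul_one _
      _ < 1 := hcq
  have hden : ∀ n : ℕ, n ≤ N → (1:ℂ) - c * q ^ n ≠ 0 := by
    intro n _
    rcases Nat.eq_zero_or_pos n with rfl | hn
    · simpa using sub_ne_zero.mpr (Ne.symm hc)
    · exact one_sub_ne_of_abs_lt (habs n hn)
  have hc0 : (1:ℂ) - c ≠ 0 := sub_ne_zero.mpr (Ne.symm hc)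
  have hPcq : qPoch (c*q) q N ≠ 0 := by
    rw [qPoch]
    apply Finset.prod_ne_zero_iff.mpr
    intro k hk
    have e : c*q*q^k = c*q^(k+1) := by rw [pow_succ]; ring
    rw [e]
    exact hden (k+1) (by have := Finset.mem_range.mp hk; omega)
  have hIcc : Finset.range (N+1) = insert 0 (Finset.Icc 1 N) := by
    ext x; simp; omega
  have h0notin : (0:ℕ) ∉ Finset.Icc 1 N := by simp
  -- partial fraction identity
  have hpf := pf hq1 N c hden
  rw [hIcc, Finset.sum_insert h0notin] at hpf
  have h00 : gbinom q N 0 * (-1:ℂ)^0 * q^(0*(0+1)/2) / (1 - c*q^0) = 1/(1-c) := by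
    simp [gbinom_zero hq1]
  rw [h00] at hpf
  have r3 : qPoch c q (N+1) = qPoch (c*q) q N * (1-c) := qPoch_succ' c q N
  rw [r3] at hpf
  have part2 : ∑ n ∈ Finset.Icc 1 N,
      gbinom q N n * (-1 : ℂ) ^ n * q ^ (n * (n + 1) / 2) / (1 - c * q ^ n)
      = 1 / (1 - c) * (qPoch q q N / qPoch (c * q) q N - 1) := by
    have h1 : ∑ n ∈ Finset.Icc 1 N,
        gbinom q N n * (-1 : ℂ) ^ n * q ^ (n * (n + 1) / 2) / (1 - c * q ^ n)
        = qPoch q q N / (qPoch (c*q) q N * (1-c)) - 1/(1-c) := by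
      linear_combination hpf
    rw [h1]
    field_simp
  refine ⟨?_, part2⟩
  -- part 1
  have hsum : ∀ n : ℕ, c ^ n * (qPoch (q ^ (n + 1)) q N - 1)
      = ∑ k ∈ Finset.Icc 1 N,
          (gbinom q N k * (-1:ℂ)^k * q^(k*(k-1)/2) * q^k) * ((c*q^k))^n := by
    intro n
    rw [qbinom_thm hq1 N (q^(n+1)), hIcc, Finset.sum_insert h0notin]
    have h0t : gbinom q N 0 * (-1:ℂ)^0 * q^(0*(0-1)/2) * (q^(n+1))^0 = 1 := by
      simp [gbinom_zero hq1]
    rw [h0t, add_sub_cancel_left, Finset.mul_sum]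
    apply Finset.sum_congr rfl
    intro k _
    have hp : (q^(n+1))^k = q^k * (q^k)^n := by
      rw [← pow_mul, ← pow_mul, ← pow_add]
      congr 1
      ring
    rw [hp, mul_pow]
    ring
  rw [tsum_congr hsum]
  have hsm : ∀ k ∈ Finset.Icc 1 N, Summable (fun n : ℕ =>
      (gbinom q N k * (-1:ℂ)^k * q^(k*(k-1)/2) * q^k) * ((c*q^k))^n) := by
    intro k hk
    have hk1 : 1 ≤ k := (Finset.mem_Icc.mp hk).1
    exact (summable_geometric_of_norm_lt_one (K := ℂ) (x := c*q^k) (by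
      exact habs k hk1)).mul_left _
  rw [Summable.tsum_finsetSum hsm]
  apply Finset.sum_congr rfl
  intro k hk
  have hk1 : 1 ≤ k := (Finset.mem_Icc.mp hk).1
  rw [tsum_mul_left, tsum_geometric_of_norm_lt_one (by
    exact habs k hk1)]
  have hpow : q^(k*(k-1)/2) * q^k = q^(k*(k+1)/2) := by
    rw [← pow_add]
    congr 1
    have h1 := tri1 k
    have h2 : k*(k+1) = (k+1)*k := Nat.mul_comm _ _
    omega
  rw [div_eq_mul_inv]
  linear_combination ((1 - c*q^k)⁻¹ * gbinom q N k * (-1:ℂ)^k) * hpow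

theorem stmt1 (N : ℕ) (hN : 1 ≤ N) (q c : ℂ) (hq0 : 0 < ‖q‖)
    (hq1 : ‖q‖ < 1) (hcq : ‖c * q‖ < 1) (hc : c ≠ 1) :
    (∑' n : ℕ, c ^ n * (qPoch (q ^ (n + 1)) q N - 1)
        = ∑ n ∈ Finset.Icc 1 N,
            gbinom q N n * (-1 : ℂ) ^ n * q ^ (n * (n + 1) / 2) / (1 - c * q ^ n))
    ∧ (∑ n ∈ Finset.Icc 1 N,
            gbinom q N n * (-1 : ℂ) ^ n * q ^ (n * (n + 1) / 2) / (1 - c * q ^ n)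
        = 1 / (1 - c) * (qPoch q q N / qPoch (c * q) q N - 1)) := by
  exact stmt1' N hN q c hq0 hq1 hcq hc
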